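/- Let H be a separable infinite-dimensional complex Hilbert space, let E be a complex inner product space of finite dimension N ≥ 1, and let (ψ_n, φ_n)_{n ∈ ℕ} (with ψ_n ∈ H, φ_n ∈ E) be an orthonormal (Hilbert) basis of H × E with the product inner product. Let Θ ⊆ ℕ be a finite set of cardinality N. If the family (φ_n)_{n ∈ Θ} is linearly independent in E, then (ψ_n)_{n ∈ ℕ∖Θ} is a Riesz basis for H, i.e., there exist an orthonormal basis (u_n)_{n ∈ ℕ∖Θ} of H and a continuous linear equivalence S : H → H with S u_n = ψ_n for every n ∈ ℕ∖Θ. -/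

import Mathlib

open scoped InnerProductSpace

private lemma mem_orth_span_aux {V : Type*} [NormedAddCommGroup V] [InnerProductSpace ℂ V]
    {s : Set V} {x : V} (h : ∀ v ∈ s, ⟪v, x⟫_ℂ = 0) : x ∈ (Submodule.span ℂ s)ᗮ := by
  rw [Submodule.mem_orthogonal]
  intro u hu
  induction hu using Submodule.span_induction with
  | mem v hv => exact h v hv
  | zero => simp
  | add u w _ _ hu hw => simp [inner_add_left, hu, hw]
  | smul c u _ hu => simp [inner_smul_left, hu]

/-- the 'if' direction of the main theorem: if `(φ n)_{n ∈ Θ}` is linearly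
independent in `E`, then `(ψ n)_{n ∉ Θ}` is a Riesz basis for `H`, i.e. the image of an
orthonormal basis of `H` under a continuous linear equivalence of `H`. -/
theorem stmt_6
    {H : Type*} [NormedAddCommGroup H] [InnerProductSpace ℂ H] [CompleteSpace H]
    [TopologicalSpace.SeparableSpace H] (hH : ¬ FiniteDimensional ℂ H)
    {E : Type*} [NormedAddCommGroup E] [InnerProductSpace ℂ E] [FiniteDimensional ℂ E]
    (N : ℕ) (hN : 1 ≤ N) (hE : Module.finrank ℂ E = N)
    (ψ : ℕ → H) (φ : ℕ → E)
    (hON : Orthonormal ℂ (fun n : ℕ => (WithLp.equiv 2 (H × E)).symm (ψ n, φ n)))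
    (hTotal : (Submodule.span ℂ
        (Set.range (fun n : ℕ => (WithLp.equiv 2 (H × E)).symm (ψ n, φ n)))).topologicalClosure
      = ⊤)
    (Θ : Finset ℕ) (hΘ : Θ.card = N)
    (hLI : LinearIndependent ℂ (fun n : Θ => φ n)) :
    ∃ (u : HilbertBasis {n : ℕ // n ∉ Θ} ℂ H) (S : H ≃L[ℂ] H),
      ∀ n : {n : ℕ // n ∉ Θ}, S (u n) = ψ n := by
  classical
  set e : ℕ → WithLp 2 (H × E) := fun n : ℕ => (WithLp.equiv 2 (H × E)).symm (ψ n, φ n) with he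
  -- `φ` restricted to `Θ` spans `E`
  have hcardE : Fintype.card Θ = Module.finrank ℂ E := by
    rw [Fintype.card_coe, hΘ, hE]
  have hΘne : Θ.Nonempty := Finset.card_pos.mp (by omega)
  haveI : Nonempty {x // x ∈ Θ} := ⟨⟨hΘne.choose, hΘne.choose_spec⟩⟩
  have hspanφ : Submodule.span ℂ (Set.range fun n : Θ => φ (n : ℕ)) = ⊤ := by
    have h := (basisOfLinearIndependentOfCardEqFinrank hLI hcardE).span_eq
    rwa [coe_basisOfLinearIndependentOfCardEqFinrank] at h
  -- a vector of `E` orthogonal to all `φ n`, `n ∈ Θ`, vanishes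
  have hEzero : ∀ x : E, (∀ n ∈ Θ, ⟪φ n, x⟫_ℂ = 0) → x = 0 := by
    intro x hx
    have hmem : x ∈ (Submodule.span ℂ (Set.range fun n : Θ => φ (n : ℕ)))ᗮ :=
      mem_orth_span_aux (by rintro v ⟨n, rfl⟩; exact hx n n.2)
    rw [hspanφ, Submodule.top_orthogonal_eq_bot] at hmem
    exact (Submodule.mem_bot ℂ).mp hmem
  -- a vector orthogonal to all `e n` vanishes
  have hGzero : ∀ x : WithLp 2 (H × E), (∀ n, ⟪e n, x⟫_ℂ = 0) → x = 0 := by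
    intro x hx
    have hmem : x ∈ (Submodule.span ℂ (Set.range e))ᗮ :=
      mem_orth_span_aux (by rintro v ⟨n, rfl⟩; exact hx n)
    rw [Submodule.topologicalClosure_eq_top_iff] at hTotal
    rw [hTotal] at hmem
    exact (Submodule.mem_bot ℂ).mp hmem
  set K : Submodule ℂ (WithLp 2 (H × E)) := (Submodule.span ℂ (e '' ↑Θ))ᗮ with hK
  have hKmem : ∀ x : WithLp 2 (H × E), (∀ n ∈ Θ, ⟪e n, x⟫_ℂ = 0) → x ∈ K := by
    intro x hx
    exact mem_orth_span_aux (by rintro v ⟨n, hn, rfl⟩; exact hx n hn)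
  have hKinner : ∀ x ∈ K, ∀ n ∈ Θ, ⟪e n, x⟫_ℂ = 0 := by
    intro x hx n hn
    exact (Submodule.mem_orthogonal _ _).mp hx _ (Submodule.subset_span ⟨n, hn, rfl⟩)
  -- the orthonormal family in `K`
  have hmemv : ∀ n : {n : ℕ // n ∉ Θ}, e (n : ℕ) ∈ K := by
    intro n
    refine hKmem _ (fun m hm => hON.2 ?_)
    rintro rfl; exact n.2 hm
  set v : {n : ℕ // n ∉ Θ} → K :=
    Set.codRestrict (fun n : {n : ℕ // n ∉ Θ} => e (n : ℕ)) K hmemv with hv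
  have hvON : Orthonormal ℂ v :=
    (hON.comp (fun n : {n : ℕ // n ∉ Θ} => (n : ℕ)) Subtype.val_injective).codRestrict K hmemv
  have hbot : (Submodule.span ℂ (Set.range v))ᗮ = ⊥ := by
    rw [Submodule.eq_bot_iff]
    intro x hx
    have hx' : ∀ n : {n : ℕ // n ∉ Θ}, ⟪e (n : ℕ), (x : WithLp 2 (H × E))⟫_ℂ = 0 := by
      intro n
      have h := (Submodule.mem_orthogonal _ _).mp hx (v n) (Submodule.subset_span ⟨n, rfl⟩)
      simpa [Submodule.coe_inner, hv] using h
    have hx0 : (x : WithLp 2 (H × E)) = 0 := by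
      refine hGzero _ (fun n => ?_)
      by_cases hn : n ∈ Θ
      · exact hKinner x x.2 n hn
      · exact hx' ⟨n, hn⟩
    exact Subtype.ext hx0
  let vb : HilbertBasis {n : ℕ // n ∉ Θ} ℂ K := HilbertBasis.mkOfOrthogonalEqBot hvON hbot
  have hvb : ⇑vb = v := HilbertBasis.coe_mkOfOrthogonalEqBot hvON hbot
  -- the projection `K → H`
  let P : K →L[ℂ] H := (ContinuousLinearMap.fst ℂ H E).comp
    ((((WithLp.prodContinuousLinearEquiv 2 ℂ H E) :
        WithLp 2 (H × E) ≃L[ℂ] H × E) : WithLp 2 (H × E) →L[ℂ] H × E).comp K.subtypeL)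
  have hPapp : ∀ x : K, P x = ((x : WithLp 2 (H × E)).fst : H) := fun x => rfl
  have hker : LinearMap.ker (P : K →ₗ[ℂ] H) = ⊥ := by
    rw [LinearMap.ker_eq_bot']
    intro x hx
    have h1 : (x : WithLp 2 (H × E)).fst = 0 := hx
    have h2 : (x : WithLp 2 (H × E)).snd = 0 := by
      refine hEzero _ (fun n hn => ?_)
      have h := hKinner x x.2 n hn
      rw [WithLp.prod_inner_apply] at h
      simpa [he, h1] using h
    apply Subtype.ext
    show (x : WithLp 2 (H × E)) = 0
    apply (WithLp.equiv 2 (H × E)).injective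
    ext
    · simpa using h1
    · simpa using h2
  have hsurj : LinearMap.range (P : K →ₗ[ℂ] H) = ⊤ := by
    rw [LinearMap.range_eq_top]
    intro x
    let L : E →ₗ[ℂ] (Θ → ℂ) :=
      LinearMap.pi fun n : Θ => ((innerSL ℂ (φ (n : ℕ))) : E →L[ℂ] ℂ).toLinearMap
    have hLapp : ∀ (m : E) (n : Θ), L m n = ⟪φ (n : ℕ), m⟫_ℂ := fun m n => rfl
    have hLinj : Function.Injective L := by
      rw [← LinearMap.ker_eq_bot, LinearMap.ker_eq_bot']
      intro m hm
      exact hEzero m fun n hn => by simpa [hLapp] using congrFun hm ⟨n, hn⟩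
    have hdim : Module.finrank ℂ E = Module.finrank ℂ (Θ → ℂ) := by
      rw [hE, Module.finrank_pi, Fintype.card_coe, hΘ]
    let LE := L.linearEquivOfInjective hLinj hdim
    set c : Θ → ℂ := fun n => - ⟪ψ (n : ℕ), x⟫_ℂ with hc
    set e' : E := LE.symm c with he'
    have hLe' : L e' = c := by
      have h := LE.apply_symm_apply c
      rwa [he', ← L.linearEquivOfInjective_apply hLinj hdim]
    set y : WithLp 2 (H × E) := (WithLp.equiv 2 (H × E)).symm (x, e') with hy
    have hyK : y ∈ K := by
      refine hKmem y (fun n hn => ?_)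
      rw [WithLp.prod_inner_apply]
      have h := congrFun hLe' ⟨n, hn⟩
      rw [hLapp] at h
      simp only [he, hy, WithLp.equiv_symm_apply, WithLp.ofLp_toLp]
      rw [h, hc]
      ring
    exact ⟨⟨y, hyK⟩, rfl⟩
  let T : K ≃L[ℂ] H := ContinuousLinearEquiv.ofBijective P hker hsurj
  -- a Hilbert basis of `H` indexed by `{n // n ∉ Θ}`
  obtain ⟨w, bw, hbw⟩ := exists_hilbertBasis ℂ H
  have hw_on : Orthonormal ℂ ((↑) : w → H) := by rw [← hbw]; exact bw.orthonormal
  have hdistw : ∀ x y : w, x ≠ y → (1 : ℝ) ≤ dist (x : H) (y : H) := by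
    intro x y hxy
    have h1 : dist (x : H) (y : H) ^ 2 = 2 := by
      rw [dist_eq_norm, @norm_sub_sq ℂ, hw_on.1 x, hw_on.1 y, hw_on.2 hxy]
      norm_num
    nlinarith [dist_nonneg (x := (x : H)) (y := (y : H))]
  obtain ⟨D, hDc, hDd⟩ := TopologicalSpace.exists_countable_dense H
  have hwc : w.Countable := by
    have hsel : ∀ x : w, ∃ y, y ∈ Metric.ball (x : H) (1/2) ∩ D :=
      fun x => Metric.dense_iff.mp hDd _ _ (by norm_num)
    choose f hf using hsel
    rw [← Set.countable_coe_iff]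
    haveI : Countable D := hDc.to_subtype
    refine Function.Injective.countable
      (f := fun x : w => (⟨f x, (hf x).2⟩ : D)) ?_
    intro x y hxy
    by_contra hne
    have h1 := hdistw x y hne
    have h2 : dist (f x) (x : H) < 1/2 := Metric.mem_ball.mp (hf x).1
    have h3 : dist (f y) (y : H) < 1/2 := Metric.mem_ball.mp (hf y).1
    have hfe : f x = f y := congrArg Subtype.val hxy
    have h4 : dist (x : H) (y : H) ≤ dist (f x) (x : H) + dist (f y) (y : H) := by
      rw [hfe, dist_comm (f y) (x : H)]
      exact dist_triangle _ _ _
    linarith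
  have hwi : w.Infinite := by
    by_contra hfin
    rw [Set.not_infinite] at hfin
    apply hH
    have hr : Set.range ⇑bw = w := by rw [hbw]; exact Subtype.range_coe
    have hfd : FiniteDimensional ℂ (Submodule.span ℂ (Set.range ⇑bw)) := by
      rw [hr]; exact FiniteDimensional.span_of_finite ℂ hfin
    have hclosed : IsClosed (Submodule.span ℂ (Set.range ⇑bw) : Set H) :=
      Submodule.closed_of_finiteDimensional _
    have htop : Submodule.span ℂ (Set.range ⇑bw) = ⊤ := by
      rw [← hclosed.submodule_topologicalClosure_eq]
      exact bw.dense_span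
    rw [htop] at hfd
    exact Submodule.topEquiv.finiteDimensional
  haveI : Countable ↥w := hwc.to_subtype
  haveI : Infinite ↥w := hwi.to_subtype
  haveI : Infinite {n : ℕ // n ∉ Θ} := by
    have h : {n : ℕ | n ∉ Θ}.Infinite := by
      simpa [Set.compl_def] using Θ.finite_toSet.infinite_compl
    exact h.to_subtype
  obtain ⟨eqv⟩ : Nonempty ({n : ℕ // n ∉ Θ} ≃ ↥w) := inferInstance
  have huON : Orthonormal ℂ fun n : {n : ℕ // n ∉ Θ} => bw (eqv n) :=
    bw.orthonormal.comp _ eqv.injective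
  have huTotal :
      ⊤ ≤ (Submodule.span ℂ (Set.range fun n : {n : ℕ // n ∉ Θ} => bw (eqv n))).topologicalClosure := by
    have : (Set.range fun n : {n : ℕ // n ∉ Θ} => bw (eqv n)) = Set.range ⇑bw := by
      have : (fun n : {n : ℕ // n ∉ Θ} => bw (eqv n)) = ⇑bw ∘ eqv := rfl
      rw [this, Set.range_comp, eqv.surjective.range_eq, Set.image_univ]
    rw [this, bw.dense_span]
  let u : HilbertBasis {n : ℕ // n ∉ Θ} ℂ H := HilbertBasis.mk huON huTotal
  have hu : ∀ n, u n = bw (eqv n) := fun n => congrFun (HilbertBasis.coe_mk huON huTotal) n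
  let U : H ≃ₗᵢ[ℂ] K := u.repr.trans vb.repr.symm
  have hU : ∀ n, U (u n) = vb n := by
    intro n
    show vb.repr.symm (u.repr (u n)) = vb n
    rw [HilbertBasis.repr_self, HilbertBasis.repr_symm_single]
  refine ⟨u, U.toContinuousLinearEquiv.trans T, fun n => ?_⟩
  show T (U.toContinuousLinearEquiv (u n)) = ψ n
  have h1 : U.toContinuousLinearEquiv (u n) = vb n := hU n
  rw [h1]
  have h2 : T (vb n) = P (vb n) := congrFun (ContinuousLinearEquiv.coeFn_ofBijective P hker hsurj) _
  rw [h2, hPapp]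
  rw [hvb]
  rfl
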